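/- arXiv:1504.08137 — 2 statements merged into one kernel-verified Lean document; each statement's English description precedes it below -/
import Mathlib

section
/- Let G = (V,E) be a finite directed graph on vertex set V (self-loops allowed, no parallel edges). Fix κ ∈ (0,1) and integers k ≤ M ≤ N with (1 - 1/√k)^k < κ and N > 2M²κ⁻³. Assume |V| > N, at most κ|V| vertices have out-degree less than k, and every vertex has in-degree at most M. Let W ⊆ V be a random subset including each vertex independently with probability 1/√k. Then with probability at least 1 − κ, the set W is 3κ-dominating (i.e., the number of vertices v with no out-edge into W is at most 3κ|V|) and |W| ≤ (2/√k)|V|. -/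
open MeasureTheory

/-- The law of a `p`-Bernoulli random subset of a finite set `V`, encoded as a
measure on `V → Bool`: each vertex is included independently with probability `p`. -/
noncomputable def bernoulliSubsetMeasure (V : Type*) [Fintype V] (p : ℝ) :
    Measure (V → Bool) :=
  Measure.sum fun W : V → Bool =>
    (ENNReal.ofReal (∏ v, if W v = true then p else 1 - p)) • Measure.dirac W

open Finset

section aux
variable {V : Type*} [Fintype V] [DecidableEq V]

/-- weight of a configuration -/
noncomputable def bw (p : ℝ) (W : V → Bool) : ℝ := ∏ v, if W v = true then p else 1 - p

lemma sum_bw_mul_prod (p : ℝ) (f : V → Bool → ℝ) :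
    ∑ W : V → Bool, bw p W * ∏ v, f v (W v)
      = ∏ v, (p * f v true + (1 - p) * f v false) := by
  have h1 : ∀ W : V → Bool, bw p W * ∏ v, f v (W v)
      = ∏ v, ((if W v = true then p else 1 - p) * f v (W v)) := by
    intro W; rw [bw, ← Finset.prod_mul_distrib]
  simp_rw [h1]
  have h2 : ∀ v : V, p * f v true + (1 - p) * f v false
      = ∑ b : Bool, (if b = true then p else 1 - p) * f v b := by
    intro v; simp [Fintype.sum_bool]
  simp_rw [h2]
  rw [Finset.prod_univ_sum (fun _ => (univ : Finset Bool))
    (fun v b => (if b = true then p else 1 - p) * f v b), Fintype.piFinset_univ]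

lemma sum_bw (p : ℝ) : ∑ W : V → Bool, bw p W = 1 := by
  have := sum_bw_mul_prod (V := V) p (fun _ _ => 1)
  simpa using this

end aux

section aux2
variable {V : Type*} [Fintype V] [DecidableEq V]

/-- indicator that `W` is false on all of `S` -/
def indF (S : Finset V) (W : V → Bool) : ℝ := ∏ v ∈ S, if W v = true then 0 else 1

/-- indicator that `W` is true on all of `S` -/
def indT (S : Finset V) (W : V → Bool) : ℝ := ∏ v ∈ S, if W v = true then 1 else 0

lemma indF_eq (S : Finset V) (W : V → Bool) :
    indF S W = if ∀ v ∈ S, W v = false then 1 else 0 := by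
  rw [indF]; split
  · next h => exact Finset.prod_eq_one fun v hv => by simp [h v hv]
  · next h =>
      push_neg at h; obtain ⟨v, hv, hW⟩ := h
      refine Finset.prod_eq_zero hv ?_
      simp [Bool.not_eq_false] at hW
      simp [hW]

lemma indT_eq (S : Finset V) (W : V → Bool) :
    indT S W = if ∀ v ∈ S, W v = true then 1 else 0 := by
  rw [indT]; split
  · next h => exact Finset.prod_eq_one fun v hv => by simp [h v hv]
  · next h =>
      push_neg at h; obtain ⟨v, hv, hW⟩ := h
      refine Finset.prod_eq_zero hv ?_
      simp [Bool.not_eq_true] at hW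
      simp [hW]

lemma indF_mul (S T : Finset V) (W : V → Bool) :
    indF S W * indF T W = indF (S ∪ T) W := by
  rw [indF_eq, indF_eq, indF_eq, if_congr Finset.forall_mem_union rfl rfl]
  by_cases h1 : ∀ v ∈ S, W v = false
  · by_cases h2 : ∀ v ∈ T, W v = false
    · rw [if_pos h1, if_pos h2, if_pos ⟨h1, h2⟩, one_mul]
    · have hc : ¬((∀ v ∈ S, W v = false) ∧ ∀ v ∈ T, W v = false) := fun h => h2 h.2
      rw [if_neg h2, if_neg hc, mul_zero]
  · have hc : ¬((∀ v ∈ S, W v = false) ∧ ∀ v ∈ T, W v = false) := fun h => h1 h.1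
    rw [if_neg h1, if_neg hc, zero_mul]

lemma indT_mul (S T : Finset V) (W : V → Bool) :
    indT S W * indT T W = indT (S ∪ T) W := by
  rw [indT_eq, indT_eq, indT_eq, if_congr Finset.forall_mem_union rfl rfl]
  by_cases h1 : ∀ v ∈ S, W v = true
  · by_cases h2 : ∀ v ∈ T, W v = true
    · rw [if_pos h1, if_pos h2, if_pos ⟨h1, h2⟩, one_mul]
    · have hc : ¬((∀ v ∈ S, W v = true) ∧ ∀ v ∈ T, W v = true) := fun h => h2 h.2
      rw [if_neg h2, if_neg hc, mul_zero]
  · have hc : ¬((∀ v ∈ S, W v = true) ∧ ∀ v ∈ T, W v = true) := fun h => h1 h.1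
    rw [if_neg h1, if_neg hc, zero_mul]

lemma sum_bw_indF (p : ℝ) (S : Finset V) :
    ∑ W : V → Bool, bw p W * indF S W = (1 - p) ^ S.card := by
  have h : ∀ W : V → Bool, indF S W
      = ∏ v, (if v ∈ S then (if W v = true then (0:ℝ) else 1) else 1) := by
    intro W
    rw [indF]
    exact ((Finset.prod_ite_mem univ S fun v => if W v = true then (0:ℝ) else 1).trans
      (by rw [Finset.univ_inter])).symm
  have h2 : ∀ v : V, (p * (if v ∈ S then (if (true:Bool) = true then (0:ℝ) else 1) else 1)
      + (1 - p) * (if v ∈ S then (if (false:Bool) = true then (0:ℝ) else 1) else 1))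
      = if v ∈ S then 1 - p else 1 := by
    intro v
    by_cases hv : v ∈ S
    · simp [hv]
    · simp [hv]
      try ring
  calc ∑ W : V → Bool, bw p W * indF S W
      = ∏ v, (p * (if v ∈ S then (if (true:Bool) = true then (0:ℝ) else 1) else 1)
        + (1 - p) * (if v ∈ S then (if (false:Bool) = true then (0:ℝ) else 1) else 1)) := by
        simp_rw [h]
        exact sum_bw_mul_prod p (fun v b => if v ∈ S then (if b = true then (0:ℝ) else 1) else 1)
    _ = ∏ v, (if v ∈ S then 1 - p else 1) := Finset.prod_congr rfl fun v _ => h2 v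
    _ = (1 - p) ^ S.card := by
        rw [Finset.prod_ite_mem univ S (fun _ => 1 - p), Finset.univ_inter, Finset.prod_const]

lemma sum_bw_indT (p : ℝ) (S : Finset V) :
    ∑ W : V → Bool, bw p W * indT S W = p ^ S.card := by
  have h : ∀ W : V → Bool, indT S W
      = ∏ v, (if v ∈ S then (if W v = true then (1:ℝ) else 0) else 1) := by
    intro W
    rw [indT]
    exact ((Finset.prod_ite_mem univ S fun v => if W v = true then (1:ℝ) else 0).trans
      (by rw [Finset.univ_inter])).symm
  have h2 : ∀ v : V, (p * (if v ∈ S then (if (true:Bool) = true then (1:ℝ) else 0) else 1)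
      + (1 - p) * (if v ∈ S then (if (false:Bool) = true then (1:ℝ) else 0) else 1))
      = if v ∈ S then p else 1 := by
    intro v
    by_cases hv : v ∈ S
    · simp [hv]
    · simp [hv]
      try ring
  calc ∑ W : V → Bool, bw p W * indT S W
      = ∏ v, (p * (if v ∈ S then (if (true:Bool) = true then (1:ℝ) else 0) else 1)
        + (1 - p) * (if v ∈ S then (if (false:Bool) = true then (1:ℝ) else 0) else 1)) := by
        simp_rw [h]
        exact sum_bw_mul_prod p (fun v b => if v ∈ S then (if b = true then (1:ℝ) else 0) else 1)
    _ = ∏ v, (if v ∈ S then p else 1) := Finset.prod_congr rfl fun v _ => h2 v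
    _ = p ^ S.card := by
        rw [Finset.prod_ite_mem univ S (fun _ => p), Finset.univ_inter, Finset.prod_const]

end aux2

section aux3
variable {V : Type*} [Fintype V] [DecidableEq V]

lemma bw_nonneg {p : ℝ} (hp0 : 0 ≤ p) (hp1 : p ≤ 1) (W : V → Bool) : 0 ≤ bw p W :=
  Finset.prod_nonneg fun v _ => by split <;> linarith

lemma cheb {α : Type*} [Fintype α] (w X : α → ℝ) (hw : ∀ a, 0 ≤ w a)
    (μ t c : ℝ) (ht : 0 < t) (hc : μ + t ≤ c) (P : α → Prop) [DecidablePred P]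
    (hP : ∀ a, P a → c < X a) :
    (∑ a ∈ univ.filter P, w a) * t ^ 2 ≤ ∑ a, w a * (X a - μ) ^ 2 := by
  rw [Finset.sum_mul]
  refine le_trans (Finset.sum_le_sum ?_)
    (Finset.sum_le_sum_of_subset_of_nonneg (Finset.subset_univ _) ?_)
  · intro a ha
    rw [Finset.mem_filter] at ha
    have h1 : t ≤ X a - μ := by have := hP a ha.2; linarith
    have h2 : t ^ 2 ≤ (X a - μ) ^ 2 := by nlinarith
    exact mul_le_mul_of_nonneg_left h2 (hw a)
  · intro a _ _
    have := hw a
    positivity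

lemma var_bound (p q : ℝ) (hq0 : 0 ≤ q) (hq1 : q ≤ 1)
    (ind : Finset V → (V → Bool) → ℝ)
    (hEi : ∀ T : Finset V, ∑ W : V → Bool, bw p W * ind T W = q ^ T.card)
    (hmul : ∀ (S T : Finset V) (W : V → Bool), ind S W * ind T W = ind (S ∪ T) W)
    (S : V → Finset V) :
    ∑ W : V → Bool, bw p W * (∑ v, ind (S v) W - ∑ v, q ^ (S v).card) ^ 2
      ≤ ∑ u, ∑ v, ((S u ∩ S v).card : ℝ) := by
  set μ := ∑ v, q ^ (S v).card with hμ
  have hEX : ∑ W : V → Bool, bw p W * (∑ v, ind (S v) W) = μ := by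
    simp_rw [Finset.mul_sum]
    rw [Finset.sum_comm]
    exact Finset.sum_congr rfl fun v _ => hEi _
  have hEX2 : ∑ W : V → Bool, bw p W * (∑ v, ind (S v) W) ^ 2
      = ∑ u, ∑ v, q ^ (S u ∪ S v).card := by
    have hsq : ∀ W : V → Bool, (∑ v, ind (S v) W) ^ 2 = ∑ u, ∑ v, ind (S u ∪ S v) W := by
      intro W
      rw [sq, Finset.sum_mul_sum]
      exact Finset.sum_congr rfl fun u _ => Finset.sum_congr rfl fun v _ => hmul _ _ _
    simp_rw [hsq, Finset.mul_sum]
    rw [Finset.sum_comm]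
    refine Finset.sum_congr rfl fun u _ => ?_
    rw [Finset.sum_comm]
    exact Finset.sum_congr rfl fun v _ => hEi _
  have hexp : ∑ W : V → Bool, bw p W * (∑ v, ind (S v) W - μ) ^ 2
      = (∑ u, ∑ v, q ^ (S u ∪ S v).card) - μ ^ 2 := by
    have e : ∀ W : V → Bool, bw p W * (∑ v, ind (S v) W - μ) ^ 2
        = bw p W * (∑ v, ind (S v) W) ^ 2
          - 2 * μ * (bw p W * (∑ v, ind (S v) W)) + μ ^ 2 * bw p W := fun W => by ring
    simp_rw [e]
    rw [Finset.sum_add_distrib, Finset.sum_sub_distrib, ← Finset.mul_sum, ← Finset.mul_sum,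
      hEX, hEX2, sum_bw]
    ring
  rw [hexp]
  have hμ2 : μ ^ 2 = ∑ u, ∑ v, q ^ (S u).card * q ^ (S v).card := by
    rw [sq, hμ, Finset.sum_mul_sum]
  rw [hμ2, ← Finset.sum_sub_distrib]
  refine Finset.sum_le_sum fun u _ => ?_
  rw [← Finset.sum_sub_distrib]
  refine Finset.sum_le_sum fun v _ => ?_
  rcases (S u ∩ S v).eq_empty_or_nonempty with he | hne
  · have hd : Disjoint (S u) (S v) := Finset.disjoint_iff_inter_eq_empty.mpr he
    rw [Finset.card_union_of_disjoint hd, pow_add, he]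
    simp
  · have h1 : (1 : ℝ) ≤ ((S u ∩ S v).card : ℝ) := by
      exact_mod_cast Finset.card_pos.mpr hne
    have h2 : q ^ (S u ∪ S v).card ≤ 1 := pow_le_one₀ hq0 hq1
    have h3 : 0 ≤ q ^ (S u).card * q ^ (S v).card := by positivity
    linarith

lemma count_pairs (S : V → Finset V) (M : ℕ)
    (hM : ∀ w : V, (univ.filter fun u => w ∈ S u).card ≤ M) :
    ∑ u, ∑ v, ((S u ∩ S v).card : ℝ) ≤ (Fintype.card V : ℝ) * (M : ℝ) ^ 2 := by
  have hcard : ∀ u v : V, ((S u ∩ S v).card : ℝ)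
      = ∑ w, (if w ∈ S u then (1:ℝ) else 0) * (if w ∈ S v then (1:ℝ) else 0) := by
    intro u v
    have hc : ((S u ∩ S v).card : ℝ) = ∑ w, if w ∈ S u ∩ S v then (1:ℝ) else 0 := by
      rw [Finset.sum_ite_mem, Finset.univ_inter, Finset.sum_const, nsmul_eq_mul, mul_one]
    rw [hc]
    refine Finset.sum_congr rfl fun w _ => ?_
    by_cases h1 : w ∈ S u <;> by_cases h2 : w ∈ S v <;>
      simp [h1, h2, Finset.mem_inter]
  simp_rw [hcard]
  have hswap : ∑ u, ∑ v, ∑ w, (if w ∈ S u then (1:ℝ) else 0) * (if w ∈ S v then (1:ℝ) else 0)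
      = ∑ w, (∑ u, if w ∈ S u then (1:ℝ) else 0) ^ 2 := by
    have h1 : ∀ u : V, ∑ v, ∑ w, (if w ∈ S u then (1:ℝ) else 0) * (if w ∈ S v then (1:ℝ) else 0)
        = ∑ w, (if w ∈ S u then (1:ℝ) else 0) * (∑ v, if w ∈ S v then (1:ℝ) else 0) := by
      intro u
      rw [Finset.sum_comm]
      exact Finset.sum_congr rfl fun w _ => (Finset.mul_sum _ _ _).symm
    simp_rw [h1]
    rw [Finset.sum_comm]
    refine Finset.sum_congr rfl fun w _ => ?_
    rw [← Finset.sum_mul, sq]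
  rw [hswap]
  have hn : ∀ w : V, (∑ u, if w ∈ S u then (1:ℝ) else 0) ^ 2 ≤ (M : ℝ) ^ 2 := by
    intro w
    have h0 : (0:ℝ) ≤ ∑ u, if w ∈ S u then (1:ℝ) else 0 :=
      Finset.sum_nonneg fun u _ => by positivity
    have h1 : ∑ u, (if w ∈ S u then (1:ℝ) else 0) ≤ (M : ℝ) := by
      rw [Finset.sum_boole]
      exact_mod_cast hM w
    nlinarith
  calc ∑ w, (∑ u, if w ∈ S u then (1:ℝ) else 0) ^ 2
      ≤ ∑ _w : V, (M : ℝ) ^ 2 := Finset.sum_le_sum fun w _ => hn w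
    _ = (Fintype.card V : ℝ) * (M : ℝ) ^ 2 := by
        rw [Finset.sum_const, Finset.card_univ, nsmul_eq_mul]

end aux3

section aux4
variable {V : Type*} [Fintype V] [DecidableEq V]

lemma bsm_apply (p : ℝ) (hp0 : 0 ≤ p) (hp1 : p ≤ 1)
    (P : (V → Bool) → Prop) [DecidablePred P] :
    bernoulliSubsetMeasure V p {W | P W}
      = ENNReal.ofReal (∑ W ∈ univ.filter P, bw p W) := by
  have hms : MeasurableSet {W : V → Bool | P W} := (Set.to_countable _).measurableSet
  rw [bernoulliSubsetMeasure, MeasureTheory.Measure.sum_apply _ hms]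
  have h1 : ∑ W ∈ univ.filter P, bw p W = ∑ W : V → Bool, if P W then bw p W else 0 :=
    Finset.sum_filter _ _
  have hnn : ∀ W : V → Bool, W ∈ univ → 0 ≤ if P W then bw p W else 0 := by
    intro W _
    by_cases h : P W <;> simp [h, bw_nonneg hp0 hp1 W]
  rw [h1, ENNReal.ofReal_sum_of_nonneg hnn, tsum_fintype]
  refine Finset.sum_congr rfl fun W _ => ?_
  rw [MeasureTheory.Measure.smul_apply, MeasureTheory.Measure.dirac_apply' _ hms, smul_eq_mul]
  by_cases h : P W
  · simp [Set.indicator_apply, h, bw]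
  · simp [Set.indicator_apply, h, bw]

end aux4


private lemma arith1 (κ n M : ℝ) (hκ0 : 0 < κ) (hn0 : 0 < n) (h2M : 2*M^2 < n*κ^3) :
    n * M^2 ≤ κ/2 * (κ*n)^2 := by nlinarith

private lemma arith2 (κ n k M : ℝ) (hκ0 : 0 < κ) (hκ1 : κ < 1) (hn0 : 0 < n) (hk1 : 1 ≤ k)
    (hMk : k ≤ M) (h2M : 2*M^2 < n*κ^3) : 2*k ≤ κ*n := by
  have hκ2 : κ^2 ≤ 1 := by nlinarith
  have hkk2 : k ≤ k^2 := by nlinarith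
  have hk2M2 : k^2 ≤ M^2 := by nlinarith
  have hκn0 : (0:ℝ) ≤ κ * n := by positivity
  nlinarith

private lemma arith3 (κ n k : ℝ) (hn0 : 0 < n) (h2k : 2*k ≤ κ*n) :
    n * (2*k) ≤ κ * n^2 := by nlinarith

set_option maxHeartbeats 1000000 in
/-- Lemma: for a `(κ,k,M)`-regular finite directed graph with `|V| > N`, where
`(1-1/√k)^k < κ` and `N > 2M²κ⁻³`, a `1/√k`-Bernoulli random subset `W` is
`3κ`-dominating and has size at most `(2/√k)|V|` with probability at least `1 - κ`. -/
theorem bernoulli_subset_dominating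
    {V : Type*} [Fintype V] [DecidableEq V] (E : Finset (V × V))
    (κ : ℝ) (hκ0 : 0 < κ) (hκ1 : κ < 1) (k M N : ℕ)
    (hkM : k ≤ M) (hMN : M ≤ N)
    (hκk : (1 - 1 / Real.sqrt k) ^ k < κ)
    (hN : (N : ℝ) > 2 * (M : ℝ) ^ 2 * κ⁻¹ ^ 3)
    (hV : Fintype.card V > N)
    (hout : ((Finset.univ.filter fun v : V =>
        (Finset.univ.filter fun w : V => (v, w) ∈ E).card < k).card : ℝ)
        ≤ κ * Fintype.card V)
    (hin : ∀ v : V, (Finset.univ.filter fun u : V => (u, v) ∈ E).card ≤ M) :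
    bernoulliSubsetMeasure V (1 / Real.sqrt k)
      {W : V → Bool |
        (((Finset.univ.filter fun v : V =>
            ∀ w : V, W w = true → (v, w) ∉ E).card : ℝ)
          ≤ 3 * κ * Fintype.card V) ∧
        (((Finset.univ.filter fun v : V => W v = true).card : ℝ)
          ≤ 2 / Real.sqrt k * Fintype.card V)}
      ≥ ENNReal.ofReal (1 - κ) := by
  classical
  set p : ℝ := 1 / Real.sqrt k with hp
  set n : ℝ := (Fintype.card V : ℝ) with hn
  -- basic numeric facts
  have hk1 : 1 ≤ k := by
    by_contra h
    push_neg at h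
    have hk0 : k = 0 := by omega
    rw [hk0] at hκk
    simp at hκk
    linarith
  have hsk1 : (1:ℝ) ≤ Real.sqrt k := by
    rw [show (1:ℝ) = Real.sqrt 1 by simp]
    exact Real.sqrt_le_sqrt (by exact_mod_cast hk1)
  have hsk0 : (0:ℝ) < Real.sqrt k := lt_of_lt_of_le one_pos hsk1
  have hp0 : 0 < p := by rw [hp]; positivity
  have hp1 : p ≤ 1 := by rw [hp, div_le_one hsk0]; exact hsk1
  have hq0 : (0:ℝ) ≤ 1 - p := by linarith
  have hq1 : (1:ℝ) - p ≤ 1 := by linarith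
  have hNn : (N:ℝ) < n := by rw [hn]; exact_mod_cast hV
  have hn0 : (0:ℝ) < n := lt_of_le_of_lt (Nat.cast_nonneg N) hNn
  have hκ3 : (0:ℝ) < κ^3 := by positivity
  have hNn' : 2*(M:ℝ)^2/κ^3 < n := by
    rw [div_eq_mul_inv, ← inv_pow]; linarith
  have h2M : 2*(M:ℝ)^2 < n * κ^3 := (div_lt_iff₀ hκ3).mp hNn'
  have hMk : (k:ℝ) ≤ (M:ℝ) := by exact_mod_cast hkM
  have hk1' : (1:ℝ) ≤ (k:ℝ) := by exact_mod_cast hk1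
  have hM1 : (1:ℝ) ≤ (M:ℝ) := le_trans hk1' hMk
  have hk0' : (0:ℝ) < (k:ℝ) := lt_of_lt_of_le one_pos hk1'
  -- neighborhoods
  set Nb : V → Finset V := fun v => univ.filter fun w : V => (v, w) ∈ E with hNb
  -- representation of the two cardinalities
  have hXrep : ∀ W : V → Bool,
      ((univ.filter fun v : V => ∀ w : V, W w = true → (v, w) ∉ E).card : ℝ)
        = ∑ v, indF (Nb v) W := by
    intro W
    rw [← Finset.sum_boole]
    refine Finset.sum_congr rfl fun v _ => ?_
    rw [indF_eq]
    refine if_congr ?_ rfl rfl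
    constructor
    · intro h w hw
      cases hb : W w with
      | false => rfl
      | true => exact absurd (Finset.mem_filter.mp hw).2 (h w hb)
    · intro h w hb hE
      have := h w (Finset.mem_filter.mpr ⟨Finset.mem_univ w, hE⟩)
      rw [hb] at this
      simp at this
  have hYrep : ∀ W : V → Bool,
      ((univ.filter fun v : V => W v = true).card : ℝ) = ∑ v, indT ({v} : Finset V) W := by
    intro W
    rw [← Finset.sum_boole]
    refine Finset.sum_congr rfl fun v _ => ?_
    rw [indT_eq]
    exact if_congr (by simp) rfl rfl
  -- means
  set μX : ℝ := ∑ v, (1 - p) ^ (Nb v).card with hμX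
  have hμXle : μX ≤ 2 * κ * n := by
    rw [hμX, ← Finset.sum_filter_add_sum_filter_not univ (fun v => (Nb v).card < k)]
    have h1 : ∑ v ∈ univ.filter (fun v => (Nb v).card < k), (1 - p) ^ (Nb v).card ≤ κ * n := by
      calc ∑ v ∈ univ.filter (fun v => (Nb v).card < k), (1 - p) ^ (Nb v).card
          ≤ ∑ _v ∈ univ.filter (fun v => (Nb v).card < k), (1:ℝ) :=
            Finset.sum_le_sum fun v _ => pow_le_one₀ hq0 hq1
        _ = ((univ.filter (fun v => (Nb v).card < k)).card : ℝ) := by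
            rw [Finset.sum_const, nsmul_eq_mul, mul_one]
        _ ≤ κ * n := hout
    have h2 : ∑ v ∈ univ.filter (fun v => ¬ (Nb v).card < k), (1 - p) ^ (Nb v).card ≤ κ * n := by
      calc ∑ v ∈ univ.filter (fun v => ¬ (Nb v).card < k), (1 - p) ^ (Nb v).card
          ≤ ∑ _v ∈ univ.filter (fun v => ¬ (Nb v).card < k), κ := by
            refine Finset.sum_le_sum fun v hv => ?_
            have hk : k ≤ (Nb v).card := le_of_not_gt (Finset.mem_filter.mp hv).2
            calc (1 - p) ^ (Nb v).card ≤ (1 - p) ^ k :=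
                  pow_le_pow_of_le_one hq0 hq1 hk
              _ ≤ κ := hκk.le
        _ = ((univ.filter (fun v => ¬ (Nb v).card < k)).card : ℝ) * κ := by
            rw [Finset.sum_const, nsmul_eq_mul]
        _ ≤ n * κ := by
            have hcle : ((univ.filter (fun v => ¬ (Nb v).card < k)).card : ℝ) ≤ n := by
              rw [hn]
              exact_mod_cast Finset.card_le_card (Finset.subset_univ _)
            exact mul_le_mul_of_nonneg_right hcle hκ0.le
        _ = κ * n := mul_comm _ _
    linarith
  set μY : ℝ := ∑ v : V, p ^ (({v} : Finset V)).card with hμY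
  have hμYval : μY = n * p := by
    rw [hμY]
    simp [Finset.card_singleton, pow_one, Finset.sum_const, Finset.card_univ, nsmul_eq_mul, hn]
  -- variance bounds
  have hvarX : ∑ W : V → Bool, bw p W * (∑ v, indF (Nb v) W - μX) ^ 2 ≤ n * (M:ℝ)^2 := by
    refine le_trans (var_bound p (1-p) hq0 hq1 indF (sum_bw_indF p) indF_mul Nb) ?_
    refine le_trans (count_pairs Nb M ?_) (le_of_eq (by rw [hn]))
    intro w
    have he : (univ.filter fun u => w ∈ Nb u) = (univ.filter fun u => (u, w) ∈ E) := by
      ext u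
      simp [hNb, Finset.mem_filter]
    rw [he]
    exact hin w
  have hvarY : ∑ W : V → Bool, bw p W * (∑ v, indT ({v} : Finset V) W - μY) ^ 2 ≤ n := by
    refine le_trans (var_bound p p hp0.le hp1 indT (sum_bw_indT p) indT_mul
      (fun v => ({v} : Finset V))) ?_
    have hM1' : ∀ w : V, (univ.filter fun u => w ∈ ({u} : Finset V)).card ≤ 1 := by
      intro w
      have he : (univ.filter fun u => w ∈ ({u} : Finset V)) = {w} := by
        ext u
        simp [Finset.mem_filter, eq_comm]
      rw [he, Finset.card_singleton]
    refine le_trans (count_pairs (fun v => ({v} : Finset V)) 1 hM1') (le_of_eq ?_)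
    rw [hn]
    norm_num
  -- Chebyshev for X
  have hchebX := cheb (bw p) (fun W : V → Bool => ∑ v, indF (Nb v) W)
    (bw_nonneg hp0.le hp1) μX (κ * n) (3 * κ * n) (by positivity) (by linarith)
    (fun W : V → Bool => ¬ (((univ.filter fun v : V =>
        ∀ w : V, W w = true → (v, w) ∉ E).card : ℝ) ≤ 3 * κ * n))
    (by
      intro W hW
      rw [not_le] at hW
      rw [hXrep W] at hW
      exact hW)
  set SA : ℝ := ∑ W ∈ univ.filter (fun W : V → Bool => ¬ (((univ.filter fun v : V =>
      ∀ w : V, W w = true → (v, w) ∉ E).card : ℝ) ≤ 3 * κ * n)), bw p W with hSA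
  have hsumA : SA ≤ κ / 2 := by
    have ht2 : (0:ℝ) < (κ * n) ^ 2 := by positivity
    have hb : n * (M:ℝ)^2 ≤ κ / 2 * (κ * n) ^ 2 := arith1 κ n M hκ0 hn0 h2M
    have h1 : SA * (κ * n) ^ 2 ≤ κ / 2 * ((κ * n) ^ 2) := by
      calc SA * (κ * n) ^ 2 ≤ _ := hchebX
        _ ≤ n * (M:ℝ)^2 := hvarX
        _ ≤ κ / 2 * (κ * n) ^ 2 := hb
    exact le_of_mul_le_mul_right h1 ht2
  -- Chebyshev for Y
  have h2p : 2 / Real.sqrt k * n = 2 * (p * n) := by rw [hp]; ring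
  have hchebY := cheb (bw p) (fun W : V → Bool => ∑ v, indT ({v} : Finset V) W)
    (bw_nonneg hp0.le hp1) μY (p * n) (2 / Real.sqrt k * n) (by positivity)
    (by rw [h2p, hμYval]; ring_nf; linarith)
    (fun W : V → Bool => ¬ (((univ.filter fun v : V => W v = true).card : ℝ)
        ≤ 2 / Real.sqrt k * n))
    (by
      intro W hW
      rw [not_le] at hW
      rw [hYrep W] at hW
      exact hW)
  set SB : ℝ := ∑ W ∈ univ.filter (fun W : V → Bool =>
      ¬ (((univ.filter fun v : V => W v = true).card : ℝ) ≤ 2 / Real.sqrt k * n)), bw p W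
    with hSB
  have hsumB : SB ≤ κ / 2 := by
    have hpn2 : (0:ℝ) < (p * n) ^ 2 := by positivity
    have hp2 : p ^ 2 = 1 / (k:ℝ) := by
      rw [hp, div_pow, one_pow, Real.sq_sqrt (by positivity)]
    have h2k : 2*(k:ℝ) ≤ κ * n := arith2 κ n k M hκ0 hκ1 hn0 hk1' hMk h2M
    have hb : n ≤ κ / 2 * (p * n) ^ 2 := by
      have e : κ / 2 * (p * n) ^ 2 = κ * n ^ 2 / (2 * (k:ℝ)) := by
        have e2 : (p * n) ^ 2 = p ^ 2 * n ^ 2 := by ring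
        rw [e2, hp2]
        field_simp
      rw [e, le_div_iff₀ (by positivity)]
      exact arith3 κ n k hn0 h2k
    have h1 : SB * (p * n) ^ 2 ≤ κ / 2 * ((p * n) ^ 2) := by
      calc SB * (p * n) ^ 2 ≤ _ := hchebY
        _ ≤ n := hvarY
        _ ≤ κ / 2 * (p * n) ^ 2 := hb
    exact le_of_mul_le_mul_right h1 hpn2
  -- assemble
  have hgood : 1 - κ ≤ ∑ W ∈ univ.filter (fun W : V → Bool =>
      ((((univ.filter fun v : V => ∀ w : V, W w = true → (v, w) ∉ E).card : ℝ)
          ≤ 3 * κ * n) ∧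
        (((univ.filter fun v : V => W v = true).card : ℝ) ≤ 2 / Real.sqrt k * n))), bw p W := by
    set PA : (V → Bool) → Prop := fun W => (((univ.filter fun v : V =>
        ∀ w : V, W w = true → (v, w) ∉ E).card : ℝ) ≤ 3 * κ * n) with hPA
    set PB : (V → Bool) → Prop := fun W => (((univ.filter fun v : V => W v = true).card : ℝ)
        ≤ 2 / Real.sqrt k * n) with hPB
    have hsplit := Finset.sum_filter_add_sum_filter_not univ (fun W : V → Bool => PA W ∧ PB W)
      (bw p)
    rw [sum_bw] at hsplit
    have hsub : univ.filter (fun W : V → Bool => ¬ (PA W ∧ PB W))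
        ⊆ univ.filter (fun W => ¬ PA W) ∪ univ.filter (fun W => ¬ PB W) := by
      intro W hW
      simp only [Finset.mem_filter, Finset.mem_union, Finset.mem_univ, true_and] at *
      tauto
    have hbad : ∑ W ∈ univ.filter (fun W : V → Bool => ¬ (PA W ∧ PB W)), bw p W ≤ κ := by
      have h1 : ∑ W ∈ univ.filter (fun W : V → Bool => ¬ (PA W ∧ PB W)), bw p W
          ≤ ∑ W ∈ univ.filter (fun W : V → Bool => ¬ PA W) ∪ univ.filter (fun W => ¬ PB W),
            bw p W :=
        Finset.sum_le_sum_of_subset_of_nonneg hsub fun W _ _ => bw_nonneg hp0.le hp1 W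
      have h2 : ∑ W ∈ univ.filter (fun W : V → Bool => ¬ PA W) ∪ univ.filter (fun W => ¬ PB W),
            bw p W
          + ∑ W ∈ univ.filter (fun W : V → Bool => ¬ PA W) ∩ univ.filter (fun W => ¬ PB W),
            bw p W
          = ∑ W ∈ univ.filter (fun W : V → Bool => ¬ PA W), bw p W
          + ∑ W ∈ univ.filter (fun W : V → Bool => ¬ PB W), bw p W :=
        Finset.sum_union_inter
      have h3 : 0 ≤ ∑ W ∈ univ.filter (fun W : V → Bool => ¬ PA W)
          ∩ univ.filter (fun W : V → Bool => ¬ PB W), bw p W :=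
        Finset.sum_nonneg fun W _ => bw_nonneg hp0.le hp1 W
      have hA' : ∑ W ∈ univ.filter (fun W : V → Bool => ¬ PA W), bw p W = SA := by rw [hSA]
      have hB' : ∑ W ∈ univ.filter (fun W : V → Bool => ¬ PB W), bw p W = SB := by rw [hSB]
      rw [hA', hB'] at h2
      linarith
    linarith
  rw [ge_iff_le, bsm_apply p hp0.le hp1 (fun W : V → Bool =>
      ((((univ.filter fun v : V => ∀ w : V, W w = true → (v, w) ∉ E).card : ℝ)
          ≤ 3 * κ * n) ∧
        (((univ.filter fun v : V => W v = true).card : ℝ) ≤ 2 / Real.sqrt k * n)))]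
  exact ENNReal.ofReal_le_ofReal hgood
end

section
/- Let G be a countable group acting by the shift on X = χ^G, where χ is a compact metric space with metric d. Let δ > 0 and F₁ ⊆ F₂ ⋐ G with F₂ = F₂⁻¹. Suppose x ∈ X satisfies stab_{δ,F₁}(x) ∩ F₁ = stab_{δ,F₂²}(x) ∩ F₁. Then for every g ∈ F₂, g·(stab_{δ,F₁}(x) ∩ F₁)·g⁻¹ ⊆ stab_{δ,F₁}(g·x). -/
open Pointwise

/-- The `(δ,F)`-approximate stabilizer of a point `x ∈ χ^G` under the shift action
`(g·x)_h = x_{g⁻¹h}`. -/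
def approxStab {G χ : Type*} [Group G] [MetricSpace χ]
    (δ : ℝ) (F : Finset G) (x : G → χ) : Set G :=
  {g : G | ∀ h ∈ F, dist (x h) (x (g⁻¹ * h)) < δ}

/-- If `F₁ ⊆ F₂ = F₂⁻¹` and `stab_{δ,F₁}(x) ∩ F₁ = stab_{δ,F₂²}(x) ∩ F₁`, then for
every `g ∈ F₂` the conjugate `g (stab_{δ,F₁}(x) ∩ F₁) g⁻¹` is contained in
`stab_{δ,F₁}(g·x)`, where `(g·x)_h = x_{g⁻¹h}`. -/
theorem conj_approxStab_subset
    {G χ : Type*} [Group G] [DecidableEq G] [MetricSpace χ]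
    (δ : ℝ) (F₁ F₂ : Finset G) (hF : F₁ ⊆ F₂) (hsym : F₂⁻¹ = F₂)
    (x : G → χ)
    (hx : approxStab δ F₁ x ∩ (F₁ : Set G) =
          approxStab δ (F₂ * F₂) x ∩ (F₁ : Set G)) :
    ∀ g ∈ F₂, ∀ f ∈ approxStab δ F₁ x ∩ (F₁ : Set G),
      g * f * g⁻¹ ∈ approxStab δ F₁ (fun h => x (g⁻¹ * h)) := by
  intro g hg f hf h hh
  rw [hx] at hf
  have hginv : g⁻¹ ∈ F₂ := by rw [← hsym]; exact Finset.inv_mem_inv hg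
  have hmem : g⁻¹ * h ∈ F₂ * F₂ := Finset.mul_mem_mul hginv (hF hh)
  have := hf.1 (g⁻¹ * h) hmem
  have key : (g * f * g⁻¹)⁻¹ * h = g * (f⁻¹ * (g⁻¹ * h)) := by group
  simpa [key, mul_assoc] using this
end
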